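/- Let x, y be integers with (x+r)^2 + ... + (x+6r)^2 = y^2 where r is an integer and gcd(x, y, r) = 1. Writing the equation as 3(2x+7r)^2 + 35r^2 = 2y^2, it follows that 7 divides both 2x+7r and y, contradicting primitivity; hence no such x, y exist for any r. -/

import Mathlib

lemma aux7 : ∀ x y r : ZMod 7,
    (x + r) ^ 2 + (x + 2 * r) ^ 2 + (x + 3 * r) ^ 2 + (x + 4 * r) ^ 2 +
      (x + 5 * r) ^ 2 + (x + 6 * r) ^ 2 = y ^ 2 → x = 0 ∧ y = 0 := by decide

theorem stmt_18 :
    ¬ ∃ x y r : ℤ, Int.gcd x (Int.gcd y r) = 1 ∧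
      (x + r) ^ 2 + (x + 2 * r) ^ 2 + (x + 3 * r) ^ 2 + (x + 4 * r) ^ 2 +
        (x + 5 * r) ^ 2 + (x + 6 * r) ^ 2 = y ^ 2 := by
  rintro ⟨x, y, r, hg, heq⟩
  have hc := congrArg (Int.cast : ℤ → ZMod 7) heq
  push_cast at hc
  obtain ⟨hx0, hy0⟩ := aux7 (x : ZMod 7) (y : ZMod 7) (r : ZMod 7) hc
  have h7x : (7 : ℤ) ∣ x := (ZMod.intCast_zmod_eq_zero_iff_dvd x 7).mp hx0
  have h7y : (7 : ℤ) ∣ y := (ZMod.intCast_zmod_eq_zero_iff_dvd y 7).mp hy0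
  obtain ⟨a, rfl⟩ := h7x
  obtain ⟨b, rfl⟩ := h7y
  have h49 : (49 : ℤ) ∣ 91 * r ^ 2 := by
    refine ⟨b ^ 2 - 6 * a ^ 2 - 6 * a * r, ?_⟩
    nlinarith [heq]
  have h7r2 : (7 : ℤ) ∣ 13 * r ^ 2 := by
    obtain ⟨k, hk⟩ := h49
    exact ⟨k, by linarith⟩
  have hp : Prime (7 : ℤ) := by norm_num
  have h7r : (7 : ℤ) ∣ r := by
    rcases hp.dvd_mul.mp h7r2 with h | h
    · norm_num at h
    · exact hp.dvd_of_dvd_pow h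
  have : (7 : ℤ) ∣ (Int.gcd (7 * a) (Int.gcd (7 * b) r) : ℤ) :=
    Int.dvd_coe_gcd ⟨a, rfl⟩ (Int.dvd_coe_gcd ⟨b, rfl⟩ h7r)
  rw [hg] at this
  norm_num at this
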